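/- Let ρ, λ, ν > 0. Let r(δ), s(δ) be the roots of ρξ² + (λ+δ-νρ)ξ - νδ = 0 and b(δ) = (1/(r-s)) log( (s/r)(ρs+δ)/(ρr+δ) ). Then δ·b(δ) → ρ·log(λ/(νρ)) as δ → ∞, provided λ > νρ. -/

import Mathlib

open Filter Topology

theorem stmt_9 (ρ lam ν : ℝ) (hρ : 0 < ρ) (hlam : 0 < lam) (hν : 0 < ν)
    (h : ν * ρ < lam)
    (r s b : ℝ → ℝ)
    (hr : ∀ δ : ℝ, r δ =
      (-(lam + δ - ν * ρ) - Real.sqrt ((lam + δ - ν * ρ)^2 + 4 * ρ * ν * δ)) / (2 * ρ))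
    (hs : ∀ δ : ℝ, s δ =
      (-(lam + δ - ν * ρ) + Real.sqrt ((lam + δ - ν * ρ)^2 + 4 * ρ * ν * δ)) / (2 * ρ))
    (hb : ∀ δ : ℝ, b δ =
      (1 / (r δ - s δ)) * Real.log ((s δ / r δ) * ((ρ * s δ + δ) / (ρ * r δ + δ)))) :
    Tendsto (fun δ => δ * b δ) atTop (𝓝 (ρ * Real.log (lam / (ν * ρ)))) := by
  have hνρ : 0 < ν * ρ := mul_pos hν hρ
  have hE : ∀ᶠ δ : ℝ in atTop, 1 + |lam| + ν * ρ ≤ δ := eventually_ge_atTop _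
  have key : ∀ δ : ℝ, 1 + |lam| + ν * ρ ≤ δ →
      0 < δ ∧ 0 < lam + δ - ν * ρ ∧ 0 < δ - lam + ν * ρ ∧
        0 < (lam + δ - ν * ρ)^2 + 4 * ρ * ν * δ := by
    intro δ hδ
    have h1 : 0 < δ := by nlinarith [abs_nonneg lam]
    have h2 : 0 < lam + δ - ν * ρ := by nlinarith [neg_abs_le lam]
    have h3 : 0 < δ - lam + ν * ρ := by nlinarith [le_abs_self lam]
    refine ⟨h1, h2, h3, ?_⟩
    nlinarith [sq_nonneg (lam + δ - ν * ρ), mul_pos (mul_pos (mul_pos (by norm_num : (0:ℝ) < 4) hρ) hν) h1]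
  have hinv : Tendsto (fun δ : ℝ => δ⁻¹) atTop (𝓝 0) := tendsto_inv_atTop_zero
  -- D δ / δ^2 → 1
  have hDq : Tendsto (fun δ => ((lam + δ - ν * ρ)^2 + 4 * ρ * ν * δ) / δ ^ 2) atTop (𝓝 1) := by
    have h1 : Tendsto (fun δ : ℝ => ((lam - ν * ρ) * δ⁻¹ + 1) ^ 2 + (4 * ρ * ν) * δ⁻¹)
        atTop (𝓝 (((lam - ν * ρ) * 0 + 1) ^ 2 + (4 * ρ * ν) * 0)) :=
      (((hinv.const_mul _).add_const 1).pow 2).add (hinv.const_mul _)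
    have h2 : (((lam - ν * ρ) * 0 + 1 : ℝ) ^ 2 + (4 * ρ * ν) * 0) = 1 := by ring
    rw [h2] at h1
    refine h1.congr' ?_
    filter_upwards [eventually_ne_atTop (0 : ℝ)] with δ hδ
    field_simp
    ring
  -- sqrt (D δ) / δ → 1
  have hsq : Tendsto (fun δ => Real.sqrt ((lam + δ - ν * ρ)^2 + 4 * ρ * ν * δ) / δ)
      atTop (𝓝 1) := by
    have h1 : Tendsto (fun δ => Real.sqrt (((lam + δ - ν * ρ)^2 + 4 * ρ * ν * δ) / δ ^ 2))
        atTop (𝓝 1) := by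
      have := (Real.continuous_sqrt.tendsto 1).comp hDq
      simpa [Function.comp_def] using this
    refine h1.congr' ?_
    filter_upwards [hE] with δ hδ
    obtain ⟨h0, _, _, hD0⟩ := key δ hδ
    rw [Real.sqrt_div hD0.le, Real.sqrt_sq h0.le]
  -- (A + sqrt D)/δ → 2
  have hplus : Tendsto
      (fun δ => (lam + δ - ν * ρ + Real.sqrt ((lam + δ - ν * ρ)^2 + 4 * ρ * ν * δ)) / δ)
      atTop (𝓝 2) := by
    have h1 := ((hinv.const_mul (lam - ν * ρ)).add_const 1).add hsq
    have h2 : ((lam - ν * ρ) * 0 + 1 + 1 : ℝ) = 2 := by ring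
    rw [h2] at h1
    refine h1.congr' ?_
    filter_upwards [eventually_ne_atTop (0 : ℝ)] with δ hδ
    field_simp
    ring
  -- (B + sqrt D)/δ → 2
  have hminus : Tendsto
      (fun δ => (δ - lam + ν * ρ + Real.sqrt ((lam + δ - ν * ρ)^2 + 4 * ρ * ν * δ)) / δ)
      atTop (𝓝 2) := by
    have h1 := ((hinv.const_mul (ν * ρ - lam)).add_const 1).add hsq
    have h2 : ((ν * ρ - lam) * 0 + 1 + 1 : ℝ) = 2 := by ring
    rw [h2] at h1
    refine h1.congr' ?_
    filter_upwards [eventually_ne_atTop (0 : ℝ)] with δ hδ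
    field_simp
    ring
  -- s → ν
  have hs_lim : Tendsto s atTop (𝓝 ν) := by
    have h1 : Tendsto (fun δ =>
        2 * ν / ((lam + δ - ν * ρ + Real.sqrt ((lam + δ - ν * ρ)^2 + 4 * ρ * ν * δ)) / δ))
        atTop (𝓝 (2 * ν / 2)) := tendsto_const_nhds.div hplus two_ne_zero
    have h2 : (2 * ν / 2 : ℝ) = ν := by ring
    rw [h2] at h1
    refine h1.congr' ?_
    filter_upwards [hE] with δ hδ
    obtain ⟨h0, hA, _, hD0⟩ := key δ hδ
    rw [hs δ]
    set q := Real.sqrt ((lam + δ - ν * ρ)^2 + 4 * ρ * ν * δ) with hqdef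
    have hq2 : q ^ 2 = (lam + δ - ν * ρ)^2 + 4 * ρ * ν * δ := Real.sq_sqrt hD0.le
    have hq0 : 0 ≤ q := Real.sqrt_nonneg _
    have hAs : 0 < lam + δ - ν * ρ + q := by linarith
    rw [div_div_eq_mul_div, div_eq_div_iff hAs.ne' (by positivity : (2:ℝ) * ρ ≠ 0)]
    nlinarith [hq2]
  -- δ / r → -ρ
  have hr_lim : Tendsto (fun δ => δ / r δ) atTop (𝓝 (-ρ)) := by
    have h1 : Tendsto (fun δ =>
        (-2 * ρ) / ((lam + δ - ν * ρ + Real.sqrt ((lam + δ - ν * ρ)^2 + 4 * ρ * ν * δ)) / δ))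
        atTop (𝓝 ((-2 * ρ) / 2)) := tendsto_const_nhds.div hplus two_ne_zero
    have h2 : ((-2 * ρ) / 2 : ℝ) = -ρ := by ring
    rw [h2] at h1
    refine h1.congr' ?_
    filter_upwards [hE] with δ hδ
    obtain ⟨h0, hA, _, hD0⟩ := key δ hδ
    rw [hr δ]
    set q := Real.sqrt ((lam + δ - ν * ρ)^2 + 4 * ρ * ν * δ) with hqdef
    have hq0 : 0 ≤ q := Real.sqrt_nonneg _
    have hAs : 0 < lam + δ - ν * ρ + q := by linarith
    rw [div_div_eq_mul_div, div_div_eq_mul_div,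
      div_eq_div_iff hAs.ne' (by nlinarith : (-(lam + δ - ν * ρ) - q) ≠ 0)]
    ring
  -- ρ r + δ → -lam
  have hρr : Tendsto (fun δ => ρ * r δ + δ) atTop (𝓝 (-lam)) := by
    have h1 : Tendsto (fun δ =>
        (-2 * lam) / ((δ - lam + ν * ρ + Real.sqrt ((lam + δ - ν * ρ)^2 + 4 * ρ * ν * δ)) / δ))
        atTop (𝓝 ((-2 * lam) / 2)) := tendsto_const_nhds.div hminus two_ne_zero
    have h2 : ((-2 * lam) / 2 : ℝ) = -lam := by ring
    rw [h2] at h1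
    refine h1.congr' ?_
    filter_upwards [hE] with δ hδ
    obtain ⟨h0, hA, hB, hD0⟩ := key δ hδ
    rw [hr δ]
    set q := Real.sqrt ((lam + δ - ν * ρ)^2 + 4 * ρ * ν * δ) with hqdef
    have hq2 : q ^ 2 = (lam + δ - ν * ρ)^2 + 4 * ρ * ν * δ := Real.sq_sqrt hD0.le
    have hq0 : 0 ≤ q := Real.sqrt_nonneg _
    have hBs : 0 < δ - lam + ν * ρ + q := by linarith
    rw [div_div_eq_mul_div, div_eq_iff hBs.ne']
    field_simp
    nlinarith [hq2]
  -- (ρ s + δ)/δ → 1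
  have hsd : Tendsto (fun δ => (ρ * s δ + δ) / δ) atTop (𝓝 1) := by
    have h1 : Tendsto (fun δ => ρ * (s δ * δ⁻¹) + 1) atTop (𝓝 (ρ * (ν * 0) + 1)) :=
      ((hs_lim.mul hinv).const_mul ρ).add_const 1
    have h2 : (ρ * (ν * 0) + 1 : ℝ) = 1 := by ring
    rw [h2] at h1
    refine h1.congr' ?_
    filter_upwards [eventually_ne_atTop (0 : ℝ)] with δ hδ
    field_simp
  -- negativity facts, eventually
  have hneg : ∀ᶠ δ : ℝ in atTop, r δ < 0 ∧ ρ * r δ + δ < 0 ∧ δ ≠ 0 := by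
    filter_upwards [hE] with δ hδ
    obtain ⟨h0, hA, hB, hD0⟩ := key δ hδ
    set q := Real.sqrt ((lam + δ - ν * ρ)^2 + 4 * ρ * ν * δ) with hqdef
    have hq2 : q ^ 2 = (lam + δ - ν * ρ)^2 + 4 * ρ * ν * δ := Real.sq_sqrt hD0.le
    have hq0 : 0 ≤ q := Real.sqrt_nonneg _
    have hBq : δ - lam + ν * ρ < q := by nlinarith [hq2, mul_pos hlam h0]
    refine ⟨?_, ?_, ne_of_gt h0⟩
    · rw [hr δ]
      exact div_neg_of_neg_of_pos (by linarith) (by positivity)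
    · rw [hr δ]
      have hrw : ρ * ((-(lam + δ - ν * ρ) - q) / (2 * ρ)) + δ = (δ - lam + ν * ρ - q) / 2 := by
        field_simp
        ring
      rw [hrw]
      exact div_neg_of_neg_of_pos (by linarith) two_pos
  -- arg → ν ρ / lam
  have harg : Tendsto (fun δ => (s δ / r δ) * ((ρ * s δ + δ) / (ρ * r δ + δ)))
      atTop (𝓝 (ν * ρ / lam)) := by
    have h1 : Tendsto (fun δ => s δ * (δ / r δ) * ((ρ * s δ + δ) / δ) * (ρ * r δ + δ)⁻¹)
        atTop (𝓝 (ν * (-ρ) * 1 * (-lam)⁻¹)) :=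
      ((hs_lim.mul hr_lim).mul hsd).mul (hρr.inv₀ (by linarith))
    have h2 : (ν * (-ρ) * 1 * (-lam)⁻¹ : ℝ) = ν * ρ / lam := by
      field_simp
    rw [h2] at h1
    refine h1.congr' ?_
    filter_upwards [hneg] with δ hδ
    obtain ⟨hrneg, hρrneg, hδ0⟩ := hδ
    have hr0 : r δ ≠ 0 := ne_of_lt hrneg
    have hρr0 : ρ * r δ + δ ≠ 0 := ne_of_lt hρrneg
    field_simp
  -- log of arg
  have hlog : Tendsto (fun δ => Real.log ((s δ / r δ) * ((ρ * s δ + δ) / (ρ * r δ + δ))))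
      atTop (𝓝 (Real.log (ν * ρ / lam))) :=
    ((Real.continuousAt_log (by positivity)).tendsto).comp harg
  -- δ / (r - s) → -ρ
  have hfront : Tendsto (fun δ => δ / (r δ - s δ)) atTop (𝓝 (-ρ)) := by
    have h1 : Tendsto (fun δ =>
        (-ρ) / (Real.sqrt ((lam + δ - ν * ρ)^2 + 4 * ρ * ν * δ) / δ)) atTop (𝓝 ((-ρ) / 1)) :=
      tendsto_const_nhds.div hsq one_ne_zero
    have h2 : ((-ρ) / 1 : ℝ) = -ρ := by ring
    rw [h2] at h1
    refine h1.congr' ?_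
    filter_upwards [hE] with δ hδ
    obtain ⟨h0, hA, hB, hD0⟩ := key δ hδ
    rw [hr δ, hs δ]
    set q := Real.sqrt ((lam + δ - ν * ρ)^2 + 4 * ρ * ν * δ) with hqdef
    have hq0 : 0 < q := Real.sqrt_pos.mpr hD0
    rw [div_sub_div_same]
    have hnum : (-(lam + δ - ν * ρ) - q) - (-(lam + δ - ν * ρ) + q) = -(2 * q) := by ring
    rw [hnum, div_div_eq_mul_div, div_div_eq_mul_div,
      div_eq_div_iff hq0.ne' (by nlinarith : -(2 * q) ≠ 0)]
    ring
  -- combine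
  have hmain := hfront.mul hlog
  have hval : (-ρ) * Real.log (ν * ρ / lam) = ρ * Real.log (lam / (ν * ρ)) := by
    rw [show (ν * ρ / lam : ℝ) = (lam / (ν * ρ))⁻¹ by
      rw [inv_div, div_eq_div_iff (ne_of_gt hlam) (ne_of_gt hlam)], Real.log_inv]
    ring
  rw [hval] at hmain
  refine hmain.congr' ?_
  filter_upwards [hneg] with δ _
  rw [hb δ]
  ring
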